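/- For every nonnegative integer a, the alternating sum over k from -a to a of (-1)^k times the cube of the binomial coefficient C(2a, k+a) equals (3a)!/(a!)^3. -/

import Mathlib

open Finset


def dixCh (N : ℕ) (m : ℤ) : ℚ :=
  if 0 ≤ m ∧ m ≤ (N : ℤ) then ((N.choose m.toNat : ℕ) : ℚ) else 0

lemma dixCh_eq {N : ℕ} {m : ℤ} {p : ℕ} (hp : (p : ℤ) = m) (h : p ≤ N) :
    dixCh N m = (N.choose p : ℚ) := by
  unfold dixCh
  rw [if_pos ⟨by omega, by omega⟩]
  have : m.toNat = p := by omega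
  rw [this]

lemma dixCh_neg {N : ℕ} {m : ℤ} (h : m < 0) : dixCh N m = 0 := by
  unfold dixCh; rw [if_neg (by omega)]

lemma dixCh_gt {N : ℕ} {m : ℤ} (h : (N : ℤ) < m) : dixCh N m = 0 := by
  unfold dixCh; rw [if_neg (by omega)]

def dixG (n : ℕ) (k : ℤ) : ℚ :=
  (-1 : ℚ) ^ k / 2 *
    ((-2 + 2*(n:ℚ) + 7*(n:ℚ)^2 + (6 + 9*(n:ℚ)) * (k:ℚ)) * (dixCh (2*n) ((n:ℤ) + k))^3
      + (-15 - 42*(n:ℚ) - 30*(n:ℚ)^2) * (dixCh (2*n) ((n:ℤ) + k))^2 * dixCh (2*n) ((n:ℤ) + k - 1)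
      + (-9 - 21*(n:ℚ) - 12*(n:ℚ)^2) * dixCh (2*n) ((n:ℤ) + k) * (dixCh (2*n) ((n:ℤ) + k - 1))^2
      + (-2 - 4*(n:ℚ) - 2*(n:ℚ)^2) * (dixCh (2*n) ((n:ℤ) + k - 1))^3)

lemma neg_one_zpow_succ (k : ℤ) : (-1 : ℚ) ^ (k + 1) = -((-1 : ℚ) ^ k) := by
  rw [zpow_add_one₀ (by norm_num : (-1 : ℚ) ≠ 0)]; ring

lemma dix_perk (n : ℕ) (k : ℤ) (h1 : -((n:ℤ)+1) ≤ k) (h2 : k ≤ (n:ℤ)+1) :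
    ((n:ℚ)+1)^2 * ((-1:ℚ)^k * (dixCh (2*(n+1)) ((n:ℤ)+1+k))^3)
      - 3*(3*(n:ℚ)+1)*(3*(n:ℚ)+2) * ((-1:ℚ)^k * (dixCh (2*n) ((n:ℤ)+k))^3)
      = dixG n (k+1) - dixG n k := by
  simp only [dixG, neg_one_zpow_succ]
  push_cast
  by_cases hbot : k = -((n:ℤ)+1)
  · -- k = -(n+1)
    rw [dixCh_eq (p := 0) (by omega) (by omega),          -- ch (2n+2) (n+1+k) = choose 0
        dixCh_neg (N := 2*n) (by omega : (n:ℤ)+k < 0),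
        dixCh_eq (N := 2*n) (p := 0) (by omega : ((0:ℕ):ℤ) = (n:ℤ)+(k+1)) (by omega),
        dixCh_neg (N := 2*n) (by omega : (n:ℤ)+(k+1)-1 < 0),
        dixCh_neg (N := 2*n) (by omega : (n:ℤ)+k-1 < 0)]
    have hkq : ((k:ℚ)) = -(n:ℚ)-1 := by
      exact_mod_cast (show k = -(n:ℤ)-1 by omega)
    rw [hkq]
    simp only [Nat.choose_zero_right, Nat.cast_one]
    ring
  by_cases htop : k = (n:ℤ)+1
  · rw [dixCh_eq (p := 2*(n+1)) (by omega) (le_refl _),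
        dixCh_gt (N := 2*n) (by omega : ((2*n:ℕ):ℤ) < (n:ℤ)+k),
        dixCh_gt (N := 2*n) (by omega : ((2*n:ℕ):ℤ) < (n:ℤ)+(k+1)),
        dixCh_gt (N := 2*n) (by omega : ((2*n:ℕ):ℤ) < (n:ℤ)+(k+1)-1),
        dixCh_eq (N := 2*n) (p := 2*n) (by omega : ((2*n:ℕ):ℤ) = (n:ℤ)+k-1) (le_refl _)]
    have hkq : ((k:ℚ)) = (n:ℚ)+1 := by
      exact_mod_cast (show k = (n:ℤ)+1 from htop)
    rw [hkq]
    simp only [Nat.choose_self, Nat.cast_one]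
    ring
  by_cases hml : k = -(n:ℤ)
  · -- k = -n
    by_cases hn0 : n = 0
    · subst hn0
      have hk0 : k = 0 := by omega
      subst hk0
      norm_num [dixCh]
    · have hn1 : 1 ≤ n := by omega
      rw [dixCh_eq (p := 1) (by omega) (by omega),             -- ch (2n+2) (n+1+k) = choose 1
          dixCh_eq (N := 2*n) (p := 0) (by omega : ((0:ℕ):ℤ) = (n:ℤ)+k) (by omega),
          dixCh_eq (N := 2*n) (p := 1) (by omega : ((1:ℕ):ℤ) = (n:ℤ)+(k+1)) (by omega),
          dixCh_eq (N := 2*n) (p := 0) (by omega : ((0:ℕ):ℤ) = (n:ℤ)+(k+1)-1) (by omega),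
          dixCh_neg (N := 2*n) (by omega : (n:ℤ)+k-1 < 0)]
      have hkq : ((k:ℚ)) = -(n:ℚ) := by
        exact_mod_cast (show k = -(n:ℤ) from hml)
      rw [hkq]
      simp only [Nat.choose_zero_right, Nat.choose_one_right, Nat.cast_one]
      push_cast
      ring
  by_cases hmr : k = (n:ℤ)
  · have hn1 : 1 ≤ n := by omega
    rw [dixCh_eq (p := 2*n+1) (by omega) (by omega),
        dixCh_eq (N := 2*n) (p := 2*n) (by omega : ((2*n:ℕ):ℤ) = (n:ℤ)+k) (le_refl _),
        dixCh_gt (N := 2*n) (by omega : ((2*n:ℕ):ℤ) < (n:ℤ)+(k+1)),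
        dixCh_eq (N := 2*n) (p := 2*n) (by omega : ((2*n:ℕ):ℤ) = (n:ℤ)+(k+1)-1) (le_refl _),
        dixCh_eq (N := 2*n) (p := 2*n-1) (by omega : ((2*n-1:ℕ):ℤ) = (n:ℤ)+k-1) (by omega)]
    have c1 : (2*(n+1)).choose (2*n+1) = 2*(n+1) := by
      rw [show 2*n+1 = 2*(n+1) - 1 from by omega, Nat.choose_symm (by omega),
        Nat.choose_one_right]
    have c2 : (2*n).choose (2*n-1) = 2*n := by
      rw [Nat.choose_symm (by omega), Nat.choose_one_right]
    rw [c1, c2]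
    have hkq : ((k:ℚ)) = (n:ℚ) := by exact_mod_cast (show k = (n:ℤ) from hmr)
    rw [hkq]
    simp only [Nat.choose_self, Nat.cast_one]
    push_cast
    ring
  · -- generic case: -n < k < n, n ≥ 1
    have hb1 : -(n:ℤ) + 1 ≤ k := by omega
    have hb2 : k ≤ (n:ℤ) - 1 := by omega
    obtain ⟨j, hj⟩ : ∃ j : ℕ, (j:ℤ) = (n:ℤ) + k := ⟨((n:ℤ)+k).toNat, Int.toNat_of_nonneg (by omega)⟩
    have hj1 : 1 ≤ j := by omega
    have hj2 : j + 1 ≤ 2*n := by omega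
    rw [dixCh_eq (p := j+1) (by omega) (by omega),        -- ch (2n+2) (n+1+k)
        dixCh_eq (N := 2*n) (p := j) (by omega : ((j:ℕ):ℤ) = (n:ℤ)+k) (by omega),
        dixCh_eq (N := 2*n) (p := j+1) (by omega : ((j+1:ℕ):ℤ) = (n:ℤ)+(k+1)) (by omega),
        dixCh_eq (N := 2*n) (p := j) (by omega : ((j:ℕ):ℤ) = (n:ℤ)+(k+1)-1) (by omega),
        dixCh_eq (N := 2*n) (p := j-1) (by omega : ((j-1:ℕ):ℤ) = (n:ℤ)+k-1) (by omega)]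
    have hs : ((2*n - j : ℕ):ℚ) = 2*(n:ℚ) - (j:ℚ) := by
      rw [Nat.cast_sub (by omega)]; push_cast; ring
    have hjq : (1:ℚ) ≤ (j:ℚ) := by exact_mod_cast hj1
    have hjq2 : (j:ℚ) + 1 ≤ 2*(n:ℚ) := by exact_mod_cast hj2
    have hc : (((j-1).factorial : ℕ) : ℚ) ≠ 0 := Nat.cast_ne_zero.mpr (Nat.factorial_ne_zero _)
    have hb : (((2*n - j).factorial : ℕ) : ℚ) ≠ 0 := Nat.cast_ne_zero.mpr (Nat.factorial_ne_zero _)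
    have hF : (((2*n).factorial : ℕ) : ℚ) ≠ 0 := Nat.cast_ne_zero.mpr (Nat.factorial_ne_zero _)
    have h01 : (j:ℚ) ≠ 0 := by intro h; rw [h] at hjq; norm_num at hjq
    have h02 : (j:ℚ) + 1 ≠ 0 := by positivity
    have h03 : 2*(n:ℚ) - (j:ℚ) ≠ 0 := by intro h; nlinarith
    have h04 : 2*(n:ℚ) - (j:ℚ) + 1 ≠ 0 := by intro h; nlinarith
    have h05 : 2*(n:ℚ) + 1 - (j:ℚ) ≠ 0 := by intro h; nlinarith
    have E1 : ((j.factorial : ℕ) : ℚ) = (j:ℚ) * ((j-1).factorial : ℚ) := by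
      exact_mod_cast congrArg (Nat.cast (R := ℚ)) (Nat.mul_factorial_pred (by omega)).symm
    have E3 : (((2*n - (j-1)).factorial : ℕ) : ℚ)
        = (2*(n:ℚ) - (j:ℚ) + 1) * ((2*n - j).factorial : ℚ) := by
      rw [show 2*n - (j-1) = (2*n - j) + 1 from by omega, Nat.factorial_succ, ← hs]
      push_cast; ring
    have E4 : (((j+1).factorial : ℕ) : ℚ) = ((j:ℚ)+1) * (j.factorial : ℚ) := by
      rw [Nat.factorial_succ]; push_cast; ring
    have E5 : (((2*(n+1)).factorial : ℕ) : ℚ)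
        = (2*(n:ℚ)+2) * (2*(n:ℚ)+1) * ((2*n).factorial : ℚ) := by
      rw [show 2*(n+1) = (2*n+1)+1 from by ring, Nat.factorial_succ, Nat.factorial_succ]
      push_cast; ring
    have E6 : (((2*(n+1) - (j+1)).factorial : ℕ) : ℚ)
        = (2*(n:ℚ) - (j:ℚ) + 1) * ((2*n - j).factorial : ℚ) := by
      rw [show 2*(n+1) - (j+1) = (2*n - j) + 1 from by omega, Nat.factorial_succ, ← hs]
      push_cast; ring
    have E7 : 2*n - (j+1) = (2*n - j) - 1 := by omega
    have E8 : (((2*n - j).factorial : ℕ) : ℚ)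
        = (2*(n:ℚ) - (j:ℚ)) * (((2*n - j) - 1).factorial : ℚ) := by
      rw [← hs]
      exact_mod_cast congrArg (Nat.cast (R := ℚ)) (Nat.mul_factorial_pred (by omega)).symm
    have B1 : (((2*n).choose (j-1) : ℕ) : ℚ)
        = (((2*n).choose j : ℕ) : ℚ) * (j:ℚ) / (2*(n:ℚ) - (j:ℚ) + 1) := by
      rw [Nat.cast_choose ℚ (show j-1 ≤ 2*n by omega), Nat.cast_choose ℚ (show j ≤ 2*n by omega),
        E1, E3]
      field_simp
    have B2 : (((2*n).choose (j+1) : ℕ) : ℚ)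
        = (((2*n).choose j : ℕ) : ℚ) * (2*(n:ℚ) - (j:ℚ)) / ((j:ℚ) + 1) := by
      rw [Nat.cast_choose ℚ (show j+1 ≤ 2*n from hj2), Nat.cast_choose ℚ (show j ≤ 2*n by omega),
        E4, E7, E8]
      field_simp
    have B3 : (((2*(n+1)).choose (j+1) : ℕ) : ℚ)
        = (((2*n).choose j : ℕ) : ℚ) * ((2*(n:ℚ)+2) * (2*(n:ℚ)+1))
          / (((j:ℚ) + 1) * (2*(n:ℚ) + 1 - (j:ℚ))) := by
      rw [Nat.cast_choose ℚ (show j+1 ≤ 2*(n+1) by omega), Nat.cast_choose ℚ (show j ≤ 2*n by omega),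
        E4, E5, E6]
      field_simp
      ring
    rw [B1, B2, B3]
    have hkq : ((k:ℚ)) = (j:ℚ) - (n:ℚ) := by
      exact_mod_cast (show (k:ℤ) = (j:ℤ) - n by omega)
    rw [hkq]
    rw [show (2*(n:ℚ)+1-(j:ℚ)) = 2*(n:ℚ)-(j:ℚ)+1 by ring]
    have h06 : (n:ℚ)*2 - (j:ℚ) + 1 ≠ 0 := by intro h; nlinarith
    field_simp
    ring

def dixS (n : ℕ) : ℚ :=
  ∑ i ∈ Finset.range (2*n+1), (-1:ℚ)^((i:ℤ) - (n:ℤ)) * (((2*n).choose i : ℕ) : ℚ)^3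

lemma dixG_top (n : ℕ) : dixG n ((n:ℤ)+2) = 0 := by
  unfold dixG
  rw [ dixCh_gt (by omega), dixCh_gt (by omega)]
  ring

lemma dixG_bot (n : ℕ) : dixG n (-((n:ℤ)+1)) = 0 := by
  unfold dixG
  rw [ dixCh_neg (by omega), dixCh_neg (by omega)]
  ring

lemma dix_sumA (n : ℕ) :
    ∑ i ∈ Finset.range (2*n+3),
      ((-1:ℚ)^((i:ℤ) - ((n:ℤ)+1)) * (dixCh (2*(n+1)) ((n:ℤ)+1+((i:ℤ)-((n:ℤ)+1))))^3)
      = dixS (n+1) := by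
  rw [dixS, show 2*(n+1)+1 = 2*n+3 from by ring]
  refine Finset.sum_congr rfl fun i hi => ?_
  rw [dixCh_eq (p := i) (by ring) (by simp at hi; omega)]
  norm_num

lemma dix_sumB (n : ℕ) :
    ∑ i ∈ Finset.range (2*n+3),
      ((-1:ℚ)^((i:ℤ) - ((n:ℤ)+1)) * (dixCh (2*n) ((n:ℤ)+((i:ℤ)-((n:ℤ)+1))))^3)
      = dixS n := by
  rw [Finset.sum_range_succ']
  rw [dixCh_neg (by omega : (n:ℤ) + (((0:ℕ):ℤ) - ((n:ℤ)+1)) < 0)]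
  rw [show (2*n+2) = (2*n+1)+1 from rfl, Finset.sum_range_succ]
  rw [dixCh_gt (by push_cast; omega : ((2*n:ℕ):ℤ) < (n:ℤ) + ((((2*n+1:ℕ)+1:ℕ):ℤ) - ((n:ℤ)+1)))]
  rw [dixS]
  norm_num
  refine Finset.sum_congr rfl fun i hi => ?_
  rw [dixCh_eq (p := i) rfl (by simp only [Finset.mem_range] at hi; omega)]

lemma dix_rec (n : ℕ) :
    ((n:ℚ)+1)^2 * dixS (n+1) = 3*(3*(n:ℚ)+1)*(3*(n:ℚ)+2) * dixS n := by
  have tele := Finset.sum_range_sub (f := fun i => dixG n ((i:ℤ) - ((n:ℤ)+1))) (2*n+3)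
  have key : ∑ i ∈ Finset.range (2*n+3),
      (((n:ℚ)+1)^2 * ((-1:ℚ)^((i:ℤ)-((n:ℤ)+1)) * (dixCh (2*(n+1)) ((n:ℤ)+1+((i:ℤ)-((n:ℤ)+1))))^3)
        - 3*(3*(n:ℚ)+1)*(3*(n:ℚ)+2) * ((-1:ℚ)^((i:ℤ)-((n:ℤ)+1)) * (dixCh (2*n) ((n:ℤ)+((i:ℤ)-((n:ℤ)+1))))^3))
      = ∑ i ∈ Finset.range (2*n+3),
        (dixG n ((((i+1:ℕ)):ℤ) - ((n:ℤ)+1)) - dixG n ((i:ℤ) - ((n:ℤ)+1))) := by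
    refine Finset.sum_congr rfl fun i hi => ?_
    simp only [Finset.mem_range] at hi
    rw [dix_perk n ((i:ℤ) - ((n:ℤ)+1)) (by omega) (by omega)]
    congr 2
    push_cast; ring
  rw [tele] at key
  rw [show (((2*n+3:ℕ)):ℤ) - ((n:ℤ)+1) = (n:ℤ)+2 from by push_cast; ring] at key
  rw [show (((0:ℕ)):ℤ) - ((n:ℤ)+1) = -((n:ℤ)+1) from by push_cast; ring] at key
  rw [dixG_top, dixG_bot] at key
  rw [Finset.sum_sub_distrib, ← Finset.mul_sum, ← Finset.mul_sum, dix_sumA, dix_sumB] at key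
  linarith

lemma dixS_eq (n : ℕ) : dixS n = ((3*n).factorial : ℚ) / ((n.factorial : ℚ))^3 := by
  induction n with
  | zero => simp [dixS]
  | succ n ih =>
    have h := dix_rec n
    have ih' : dixS n * ((n.factorial : ℚ))^3 = ((3*n).factorial : ℚ) := by
      rw [ih]
      field_simp
    rw [eq_div_iff (by positivity : (((n+1).factorial : ℚ))^3 ≠ 0)]
    have hf1 : (((3*(n+1)).factorial : ℕ) : ℚ)
        = (3*(n:ℚ)+3)*(3*(n:ℚ)+2)*(3*(n:ℚ)+1) * ((3*n).factorial : ℚ) := by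
      rw [show 3*(n+1) = ((3*n+1)+1)+1 from by ring, Nat.factorial_succ, Nat.factorial_succ,
        Nat.factorial_succ]
      push_cast; ring
    have hf2 : (((n+1).factorial : ℕ) : ℚ) = ((n:ℚ)+1) * (n.factorial : ℚ) := by
      rw [Nat.factorial_succ]; push_cast; ring
    rw [hf1, hf2]
    linear_combination ((n:ℚ)+1) * ((n.factorial:ℚ))^3 * h
      + 3*(3*(n:ℚ)+1)*(3*(n:ℚ)+2)*((n:ℚ)+1) * ih'

theorem dixon_original (a : ℕ) :
    ∑ k ∈ Finset.Icc (-(a : ℤ)) (a : ℤ),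
      (-1 : ℚ) ^ k * ((2 * a).choose (k + a).toNat : ℚ) ^ 3
      = ((3 * a).factorial : ℚ) / ((a.factorial : ℚ)) ^ 3 := by
  rw [← dixS_eq, dixS]
  refine Finset.sum_nbij' (i := fun k => (k + (a:ℤ)).toNat) (j := fun i => (i:ℤ) - (a:ℤ))
    ?_ ?_ ?_ ?_ ?_
  · intro k hk
    simp only [Finset.mem_Icc] at hk
    simp only [Finset.mem_range]
    omega
  · intro i hi
    simp only [Finset.mem_range] at hi
    simp only [Finset.mem_Icc]
    omega
  · intro k hk
    simp only [Finset.mem_Icc] at hk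
    omega
  · intro i hi
    simp only [Finset.mem_range] at hi
    omega
  · intro k hk
    simp only [Finset.mem_Icc] at hk
    have h1 : (((k + (a:ℤ)).toNat : ℕ) : ℤ) - (a:ℤ) = k := by omega
    rw [h1]
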